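/- Suppose E[P_{k+1}] = θ(k) P̄ + (1−θ(k)) h(E[P_k]) with θ(k) ≥ θ' > θ_c = 1 − 1/ρ(A)² for all k ≥ K, for some finite K, and E[P_K] is a fixed positive semidefinite matrix. Then sup_k tr(E[P_k]) < ∞. -/

import Mathlib

open Matrix Filter Topology

attribute [local instance] Matrix.linftyOpNormedRing Matrix.linftyOpNormedAlgebra

namespace Stmt16Aux

variable {n : ℕ}

lemma trace_nonneg_of_psd {M : Matrix (Fin n) (Fin n) ℝ} (hM : M.PosSemidef) :
    0 ≤ M.trace := by
  rw [Matrix.trace]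
  refine Finset.sum_nonneg fun i _ => ?_
  exact hM.diag_nonneg

lemma trace_mul_nonneg {P X : Matrix (Fin n) (Fin n) ℝ} (hP : P.PosSemidef) (hX : X.PosSemidef) :
    0 ≤ (P * X).trace := by
  obtain ⟨B, rfl⟩ : ∃ B : Matrix (Fin n) (Fin n) ℝ, P = Bᴴ * B := by
    open MatrixOrder in
    obtain ⟨B, hB⟩ := CStarAlgebra.nonneg_iff_eq_star_mul_self.mp hP.nonneg
    exact ⟨B, by rw [hB, star_eq_conjTranspose]⟩
  have h1 : (Bᴴ * B * X).trace = (B * X * Bᴴ).trace := by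
    rw [Matrix.mul_assoc, Matrix.trace_mul_comm, Matrix.mul_assoc]
  rw [h1]
  exact trace_nonneg_of_psd (hX.mul_mul_conjTranspose_same B)

lemma psd_conj_transpose {X : Matrix (Fin n) (Fin n) ℝ} (hX : X.PosSemidef)
    (M : Matrix (Fin n) (Fin n) ℝ) : (M * X * Mᵀ).PosSemidef := by
  have := hX.mul_mul_conjTranspose_same M
  simpa [Matrix.conjTranspose_eq_transpose_of_trivial] using this

lemma conj_trace_le {M X : Matrix (Fin n) (Fin n) ℝ} (hX : X.PosSemidef) {c : ℝ}
    (h : ∀ x : Fin n → ℝ, (M *ᵥ x) ⬝ᵥ (M *ᵥ x) ≤ c * (x ⬝ᵥ x)) :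
    (M * X * Mᵀ).trace ≤ c * X.trace := by
  have hpsd : (c • (1 : Matrix (Fin n) (Fin n) ℝ) - Mᵀ * M).PosSemidef := by
    rw [posSemidef_iff_dotProduct_mulVec]
    constructor
    · show _ = _
      rw [conjTranspose_sub, conjTranspose_smul, conjTranspose_one, conjTranspose_mul,
        conjTranspose_eq_transpose_of_trivial, conjTranspose_eq_transpose_of_trivial,
        transpose_transpose, star_trivial]
    · intro x
      have hx := h x
      have e1 : star x = x := by
        funext i; exact star_trivial _
      rw [e1, sub_mulVec, dotProduct_sub, smul_mulVec, one_mulVec, dotProduct_smul,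
        ← Matrix.mulVec_mulVec, Matrix.dotProduct_mulVec x Mᵀ, Matrix.vecMul_transpose]
      simp only [smul_eq_mul]
      linarith
  have key := trace_mul_nonneg hpsd hX
  have expand : (c • (1 : Matrix (Fin n) (Fin n) ℝ) - Mᵀ * M) * X
      = c • X - Mᵀ * M * X := by
    rw [Matrix.sub_mul, Matrix.smul_mul, Matrix.one_mul]
  rw [expand, Matrix.trace_sub, Matrix.trace_smul] at key
  have h2 : (Mᵀ * M * X).trace = (M * X * Mᵀ).trace := by
    rw [Matrix.mul_assoc, Matrix.trace_mul_comm, Matrix.mul_assoc]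
  rw [h2] at key
  simp only [smul_eq_mul] at key
  linarith

lemma mulVec_dot_le {M : Matrix (Fin n) (Fin n) ℝ} {c : ℝ} (hc : 0 ≤ c)
    (h : ∀ i j, |M i j| ≤ c) (x : Fin n → ℝ) :
    (M *ᵥ x) ⬝ᵥ (M *ᵥ x) ≤ ((n : ℝ) * c) ^ 2 * (x ⬝ᵥ x) := by
  have habs : ∀ i, |(M *ᵥ x) i| ≤ c * ∑ j, |x j| := by
    intro i
    calc |∑ j, M i j * x j| ≤ ∑ j, |M i j * x j| := Finset.abs_sum_le_sum_abs _ _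
    _ ≤ ∑ j, c * |x j| := Finset.sum_le_sum fun j _ => by
        rw [abs_mul]; exact mul_le_mul_of_nonneg_right (h i j) (abs_nonneg _)
    _ = c * ∑ j, |x j| := by rw [Finset.mul_sum]
  have hsq : (∑ j, |x j|) ^ 2 ≤ (n : ℝ) * ∑ j, x j ^ 2 := by
    have := sq_sum_le_card_mul_sum_sq (s := Finset.univ) (f := fun j : Fin n => |x j|)
    simpa [sq_abs] using this
  have hsum : ∀ j : Fin n, (0:ℝ) ≤ x j ^ 2 := fun j => sq_nonneg _
  calc (M *ᵥ x) ⬝ᵥ (M *ᵥ x) = ∑ i, ((M *ᵥ x) i) ^ 2 := by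
        simp [dotProduct, sq]
  _ ≤ ∑ _i : Fin n, (c * ∑ j, |x j|) ^ 2 := Finset.sum_le_sum fun i _ => by
        rw [← sq_abs ((M *ᵥ x) i)]
        exact pow_le_pow_left₀ (abs_nonneg _) (habs i) 2
  _ = (n : ℝ) * (c * ∑ j, |x j|) ^ 2 := by
        rw [Finset.sum_const, Finset.card_univ, Fintype.card_fin, nsmul_eq_mul]
  _ = (n : ℝ) * (c ^ 2 * (∑ j, |x j|) ^ 2) := by ring
  _ ≤ (n : ℝ) * (c ^ 2 * ((n : ℝ) * ∑ j, x j ^ 2)) := by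
        have hn : (0:ℝ) ≤ (n : ℝ) := Nat.cast_nonneg n
        have hc2 : (0:ℝ) ≤ c ^ 2 := sq_nonneg c
        gcongr
  _ = ((n : ℝ) * c) ^ 2 * (x ⬝ᵥ x) := by
        have hdot : x ⬝ᵥ x = ∑ j, x j ^ 2 := by simp [dotProduct, sq]
        rw [hdot]; ring

lemma entry_le_norm (M : Matrix (Fin n) (Fin n) ℂ) (i j : Fin n) : ‖M i j‖ ≤ ‖M‖ := by
  have h : ‖M i j‖₊ ≤ ‖M‖₊ := by
    rw [Matrix.linfty_opNNNorm_def]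
    calc ‖M i j‖₊ ≤ ∑ k, ‖M i k‖₊ :=
          Finset.single_le_sum (f := fun k => ‖M i k‖₊) (fun k _ => zero_le) (Finset.mem_univ j)
    _ ≤ _ := Finset.le_sup (f := fun i => ∑ k, ‖M i k‖₊) (Finset.mem_univ i)
  exact_mod_cast h

lemma exists_good_m (hn : 0 < n) (Bc : Matrix (Fin n) (Fin n) ℂ) {s' s : ℝ}
    (hs'0 : 0 < s') (hr : (spectralRadius ℂ Bc).toReal < s') (hs' : s' < s) :
    ∃ m : ℕ, 1 ≤ m ∧ ‖Bc ^ m‖ ≤ s' ^ m ∧ (n : ℝ) * s' ^ m ≤ s ^ m := by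
  haveI : Nonempty (Fin n) := ⟨⟨0, hn⟩⟩
  haveI : CompleteSpace (Matrix (Fin n) (Fin n) ℂ) := FiniteDimensional.complete ℂ _
  have hfin : spectralRadius ℂ Bc ≠ ⊤ :=
    ((spectrum.spectralRadius_le_nnnorm (𝕜 := ℂ) Bc).trans_lt ENNReal.coe_lt_top).ne
  have hlt : spectralRadius ℂ Bc < ENNReal.ofReal s' :=
    (ENNReal.lt_ofReal_iff_toReal_lt hfin).mpr hr
  have hev1 := (spectrum.pow_norm_pow_one_div_tendsto_nhds_spectralRadius Bc).eventually_lt_const hlt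
  have hs0 : 0 < s := hs'0.trans hs'
  have htend : Tendsto (fun m : ℕ => (n : ℝ) * (s' / s) ^ m) atTop (𝓝 0) := by
    have h0 := tendsto_pow_atTop_nhds_zero_of_lt_one (le_of_lt (div_pos hs'0 hs0))
      ((div_lt_one hs0).mpr hs')
    simpa using h0.const_mul (n : ℝ)
  have hev2 := htend.eventually_lt_const (show (0:ℝ) < 1 by norm_num)
  obtain ⟨m, ⟨hm1, hm2⟩, hm3⟩ := ((hev1.and hev2).and (eventually_ge_atTop 1)).exists
  refine ⟨m, hm3, ?_, ?_⟩
  · have hm0 : (m : ℝ) ≠ 0 := by positivity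
    have h1 : ‖Bc ^ m‖ ^ (1 / (m:ℝ)) < s' := (ENNReal.ofReal_lt_ofReal_iff hs'0).mp hm1
    have h2 : (‖Bc ^ m‖ ^ (1 / (m:ℝ))) ^ (m : ℕ) = ‖Bc ^ m‖ := by
      rw [← Real.rpow_natCast (‖Bc ^ m‖ ^ (1 / (m:ℝ))) m, ← Real.rpow_mul (norm_nonneg _),
        one_div_mul_cancel hm0, Real.rpow_one]
    calc ‖Bc ^ m‖ = (‖Bc ^ m‖ ^ (1 / (m:ℝ))) ^ (m : ℕ) := h2.symm
    _ ≤ s' ^ m := pow_le_pow_left₀ (Real.rpow_nonneg (norm_nonneg _) _) h1.le m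
  · have hsm : (0:ℝ) < s ^ m := pow_pos hs0 m
    rw [div_pow, ← mul_div_assoc] at hm2
    exact ((div_lt_one hsm).mp hm2).le

lemma geo_bound {c0 q : ℝ} (hq0 : 0 ≤ q) (hq1 : q < 1)
    {g : ℕ → ℝ} {K : ℕ} (hstep : ∀ k ≥ K, g (k + 1) ≤ c0 + q * g k) :
    ∀ i, g (K + i) ≤ max (g K) (c0 / (1 - q)) := by
  intro i
  induction i with
  | zero => exact le_max_left _ _
  | succ i ih =>
    have h1q : 0 < 1 - q := by linarith
    have h1 : g (K + i + 1) ≤ c0 + q * g (K + i) := hstep _ (Nat.le_add_right K i)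
    have h2 : c0 ≤ (1 - q) * max (g K) (c0 / (1 - q)) := by
      have hmax := le_max_right (g K) (c0 / (1 - q))
      calc c0 = (1 - q) * (c0 / (1 - q)) := by field_simp
      _ ≤ (1 - q) * max (g K) (c0 / (1 - q)) :=
        mul_le_mul_of_nonneg_left hmax h1q.le
    have h3 : q * g (K + i) ≤ q * max (g K) (c0 / (1 - q)) :=
      mul_le_mul_of_nonneg_left ih hq0
    have he : K + (i + 1) = K + i + 1 := rfl
    rw [he]
    nlinarith

end Stmt16Aux

set_option maxHeartbeats 1000000 in
/-- If from time `K` on the reception probability satisfies `θ(k) ≥ θ' > θ_c = 1 − 1/ρ(A)²`,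
then the expected error covariance recursion stays trace-bounded. -/
theorem stmt_16 {n : ℕ} (A Q Pbar : Matrix (Fin n) (Fin n) ℝ)
    (hQ : Q.PosSemidef) (hPbar : Pbar.PosSemidef)
    (θ : ℕ → ℝ) (hθ01 : ∀ k, 0 ≤ θ k ∧ θ k ≤ 1)
    (θ' : ℝ) (K : ℕ)
    (hθ' : ∀ k ≥ K, θ' ≤ θ k)
    (hstab : θ' > 1 - 1 / ((spectralRadius ℂ (A.map Complex.ofReal)).toReal) ^ 2)
    (EP : ℕ → Matrix (Fin n) (Fin n) ℝ)
    (hpsd : ∀ k, (EP k).PosSemidef)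
    (hrec : ∀ k ≥ K, EP (k + 1) = θ k • Pbar + (1 - θ k) • (A * EP k * Aᵀ + Q)) :
    ∃ C : ℝ, ∀ k, (EP k).trace ≤ C := by
  classical
  rcases Nat.eq_zero_or_pos n with hn0 | hn
  · refine ⟨0, fun k => le_of_eq ?_⟩
    subst hn0
    simp [Matrix.trace]
  have htrnn : ∀ k, 0 ≤ (EP k).trace := fun k => Stmt16Aux.trace_nonneg_of_psd (hpsd k)
  have hθ'1 : θ' ≤ 1 := le_trans (hθ' K le_rfl) (hθ01 K).2
  set t : ℝ := 1 - θ' with htdef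
  rcases le_or_gt t 0 with ht | ht
  · -- degenerate case θ' ≥ 1
    have hEP : ∀ k ≥ K, EP (k + 1) = Pbar := by
      intro k hk
      have h1 : θ k = 1 := le_antisymm (hθ01 k).2 (by have := hθ' k hk; simp only [htdef] at ht; linarith)
      rw [hrec k hk, h1]
      simp
    refine ⟨Pbar.trace + ∑ j ∈ Finset.range (K + 1), (EP j).trace, fun k => ?_⟩
    have hsum0 : 0 ≤ ∑ j ∈ Finset.range (K + 1), (EP j).trace :=
      Finset.sum_nonneg fun j _ => htrnn j
    rcases le_or_gt k K with hk | hk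
    · have hle : (EP k).trace ≤ ∑ j ∈ Finset.range (K + 1), (EP j).trace :=
        Finset.single_le_sum (fun j _ => htrnn j) (Finset.mem_range.mpr (Nat.lt_succ_of_le hk))
      have := Stmt16Aux.trace_nonneg_of_psd hPbar
      linarith
    · obtain ⟨k', rfl⟩ : ∃ k', k = k' + 1 := ⟨k - 1, by omega⟩
      rw [hEP k' (by omega)]
      linarith
  -- main case : 0 < t = 1 - θ'
  set r : ℝ := (spectralRadius ℂ (A.map Complex.ofReal)).toReal with hrdef
  have hrnn : 0 ≤ r := ENNReal.toReal_nonneg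
  have hb : t < 1 / r ^ 2 := by simp only [htdef]; linarith [hstab]
  have hr2 : 0 < r ^ 2 := by
    rcases lt_or_eq_of_le (sq_nonneg r) with h | h
    · exact h
    · exfalso; rw [← h] at hb; simp at hb; linarith
  have hr0 : 0 < r := by
    rcases hrnn.lt_or_eq with h | h
    · exact h
    · exfalso; rw [← h] at hr2; simp at hr2
  have hrb : r ^ 2 < 1 / t := by
    have h1 : t * r ^ 2 < 1 := (lt_div_iff₀ hr2).mp hb
    exact (lt_div_iff₀ ht).mpr (by linarith)
  set β : ℝ := (r ^ 2 + 1 / t) / 2 with hβdef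
  set α : ℝ := (r ^ 2 + β) / 2 with hαdef
  have hα1 : r ^ 2 < α := by rw [hαdef, hβdef]; linarith
  have hα2 : α < β := by rw [hαdef, hβdef]; linarith
  have hβ1 : β < 1 / t := by rw [hβdef]; linarith
  have hα0 : 0 < α := lt_trans hr2 hα1
  have hβ0 : 0 < β := hα0.trans hα2
  set s' : ℝ := Real.sqrt α with hs'def
  set s : ℝ := Real.sqrt β with hsdef
  have hs'0 : 0 < s' := Real.sqrt_pos.mpr hα0
  have hs0 : 0 < s := Real.sqrt_pos.mpr hβ0
  have hs2 : s ^ 2 = β := Real.sq_sqrt hβ0.le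
  have hrs' : r < s' := by
    have h := Real.sqrt_lt_sqrt (sq_nonneg r) hα1
    rwa [Real.sqrt_sq hrnn] at h
  have hs's : s' < s := Real.sqrt_lt_sqrt hα0.le hα2
  have hq1 : t * s ^ 2 < 1 := by
    rw [hs2]
    calc t * β < t * (1 / t) := mul_lt_mul_of_pos_left hβ1 ht
    _ = 1 := by field_simp
  obtain ⟨m, hm1, hBm, hnm⟩ := Stmt16Aux.exists_good_m hn (A.map Complex.ofReal) hs'0 hrs' hs's
  set u : ℝ := (s ^ 2)⁻¹ with hudef
  have hu0 : 0 < u := by positivity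
  have hus : u * s ^ 2 = 1 := inv_mul_cancel₀ (by positivity)
  set F : ℕ → Matrix (Fin n) (Fin n) ℝ → ℝ :=
    fun j X => (A ^ j * X * (A ^ j)ᵀ).trace with hFdef
  set V : Matrix (Fin n) (Fin n) ℝ → ℝ :=
    fun X => ∑ j ∈ Finset.range m, u ^ j * F j X with hVdef
  have hF0 : ∀ X : Matrix (Fin n) (Fin n) ℝ, F 0 X = X.trace := by
    intro X; simp [hFdef]
  have hFnn : ∀ (j : ℕ) (X : Matrix (Fin n) (Fin n) ℝ), X.PosSemidef → 0 ≤ F j X :=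
    fun j X hX => Stmt16Aux.trace_nonneg_of_psd (Stmt16Aux.psd_conj_transpose hX _)
  have hVnn : ∀ X, X.PosSemidef → 0 ≤ V X := by
    intro X hX
    exact Finset.sum_nonneg fun j _ => mul_nonneg (by positivity) (hFnn j X hX)
  have hVtr : ∀ X, X.PosSemidef → X.trace ≤ V X := by
    intro X hX
    have h0 : u ^ 0 * F 0 X = X.trace := by rw [pow_zero, one_mul, hF0]
    calc X.trace = u ^ 0 * F 0 X := h0.symm
    _ ≤ V X := Finset.single_le_sum (f := fun j => u ^ j * F j X)
        (fun j _ => mul_nonneg (by positivity) (hFnn j X hX))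
        (Finset.mem_range.mpr hm1)
  have hmap : (A.map Complex.ofReal) ^ m = (A ^ m).map Complex.ofReal := by
    have h := map_pow (Complex.ofRealHom.mapMatrix :
      Matrix (Fin n) (Fin n) ℝ →+* Matrix (Fin n) (Fin n) ℂ) A m
    exact h.symm
  have hent : ∀ i j, |(A ^ m) i j| ≤ ‖(A.map Complex.ofReal) ^ m‖ := by
    intro i j
    calc |(A ^ m) i j| = ‖((A ^ m).map Complex.ofReal) i j‖ := by
          simp [Matrix.map_apply, Complex.norm_real, Real.norm_eq_abs]
    _ ≤ ‖(A ^ m).map Complex.ofReal‖ := Stmt16Aux.entry_le_norm _ i j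
    _ = ‖(A.map Complex.ofReal) ^ m‖ := by rw [hmap]
  have hFm : ∀ X : Matrix (Fin n) (Fin n) ℝ, X.PosSemidef → F m X ≤ s ^ (2 * m) * X.trace := by
    intro X hX
    have hvec : ∀ x : Fin n → ℝ, (A ^ m *ᵥ x) ⬝ᵥ (A ^ m *ᵥ x) ≤ s ^ (2 * m) * (x ⬝ᵥ x) := by
      intro x
      have h1 := Stmt16Aux.mulVec_dot_le (norm_nonneg ((A.map Complex.ofReal) ^ m)) hent x
      have h2 : ((n : ℝ) * ‖(A.map Complex.ofReal) ^ m‖) ^ 2 ≤ s ^ (2 * m) := by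
        have h3 : (n : ℝ) * ‖(A.map Complex.ofReal) ^ m‖ ≤ s ^ m :=
          le_trans (mul_le_mul_of_nonneg_left hBm (Nat.cast_nonneg n)) hnm
        calc ((n : ℝ) * ‖(A.map Complex.ofReal) ^ m‖) ^ 2 ≤ (s ^ m) ^ 2 :=
              pow_le_pow_left₀ (by positivity) h3 2
        _ = s ^ (2 * m) := by rw [← pow_mul, Nat.mul_comm]
      have hxx : (0:ℝ) ≤ x ⬝ᵥ x :=
        show (0:ℝ) ≤ ∑ j, x j * x j from Finset.sum_nonneg fun j _ => mul_self_nonneg _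
      calc (A ^ m *ᵥ x) ⬝ᵥ (A ^ m *ᵥ x)
          ≤ ((n : ℝ) * ‖(A.map Complex.ofReal) ^ m‖) ^ 2 * (x ⬝ᵥ x) := h1
      _ ≤ s ^ (2 * m) * (x ⬝ᵥ x) := mul_le_mul_of_nonneg_right h2 hxx
    simpa [hFdef] using Stmt16Aux.conj_trace_le hX hvec
  have hFlin : ∀ (j : ℕ) (a b : ℝ) (X Y : Matrix (Fin n) (Fin n) ℝ),
      F j (a • X + b • Y) = a * F j X + b * F j Y := by
    intro j a b X Y
    simp only [hFdef, Matrix.mul_add, Matrix.add_mul, Matrix.mul_smul, Matrix.smul_mul,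
      Matrix.trace_add, Matrix.trace_smul, smul_eq_mul]
  have hFadd : ∀ (j : ℕ) (X Y : Matrix (Fin n) (Fin n) ℝ), F j (X + Y) = F j X + F j Y := by
    intro j X Y
    simp only [hFdef, Matrix.mul_add, Matrix.add_mul, Matrix.trace_add]
  have hFshift : ∀ (j : ℕ) (X : Matrix (Fin n) (Fin n) ℝ), F j (A * X * Aᵀ) = F (j + 1) X := by
    intro j X
    simp only [hFdef, pow_succ, Matrix.transpose_mul, Matrix.mul_assoc]
  set g : ℕ → ℝ := fun k => V (EP k) with hgdef
  set c0 : ℝ := V Pbar + t * V Q with hc0def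
  set q : ℝ := t * s ^ 2 with hqdef
  have hq0 : 0 ≤ q := mul_nonneg ht.le (sq_nonneg s)
  have hVP : 0 ≤ V Pbar := hVnn Pbar hPbar
  have hVQ : 0 ≤ V Q := hVnn Q hQ
  have hstep : ∀ k ≥ K, g (k + 1) ≤ c0 + q * g k := by
    intro k hk
    have hθk := hθ01 k
    have hθ'k := hθ' k hk
    have h1θ : 1 - θ k ≤ t := by rw [htdef]; linarith
    have h1θ0 : 0 ≤ 1 - θ k := by linarith [hθk.2]
    have hexp : ∀ j, F j (EP (k + 1))
        = θ k * F j Pbar + (1 - θ k) * (F (j + 1) (EP k) + F j Q) := by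
      intro j
      rw [hrec k hk, hFlin j (θ k) (1 - θ k) Pbar (A * EP k * Aᵀ + Q),
        hFadd j (A * EP k * Aᵀ) Q, hFshift j (EP k)]
    have hgsplit : g (k + 1) = θ k * V Pbar
        + (1 - θ k) * ((∑ j ∈ Finset.range m, u ^ j * F (j + 1) (EP k)) + V Q) := by
      have hpt : ∀ j ∈ Finset.range m, u ^ j * F j (EP (k + 1))
          = θ k * (u ^ j * F j Pbar)
            + (1 - θ k) * (u ^ j * F (j + 1) (EP k) + u ^ j * F j Q) := by
        intro j _; rw [hexp j]; ring
      calc g (k + 1) = ∑ j ∈ Finset.range m, (θ k * (u ^ j * F j Pbar)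
            + (1 - θ k) * (u ^ j * F (j + 1) (EP k) + u ^ j * F j Q)) :=
        Finset.sum_congr rfl hpt
      _ = _ := by
        simp only [hVdef, mul_add, Finset.sum_add_distrib, ← Finset.mul_sum]
    have hgk : g k = ∑ j ∈ Finset.range m, u ^ j * F j (EP k) := by simp only [hgdef, hVdef]
    have hS : (∑ j ∈ Finset.range m, u ^ j * F (j + 1) (EP k)) ≤ s ^ 2 * g k := by
      have hterm : ∀ j ∈ Finset.range m, u ^ j * F (j + 1) (EP k)
          = s ^ 2 * (u ^ (j + 1) * F (j + 1) (EP k)) := by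
        intro j _
        have he : s ^ 2 * u ^ (j + 1) = u ^ j := by
          rw [pow_succ]
          calc s ^ 2 * (u ^ j * u) = (u * s ^ 2) * u ^ j := by ring
          _ = u ^ j := by rw [hus, one_mul]
        calc u ^ j * F (j + 1) (EP k) = (s ^ 2 * u ^ (j + 1)) * F (j + 1) (EP k) := by rw [he]
        _ = s ^ 2 * (u ^ (j + 1) * F (j + 1) (EP k)) := by ring
      have hsum : (∑ j ∈ Finset.range m, u ^ j * F (j + 1) (EP k))
          = s ^ 2 * ((∑ j ∈ Finset.range (m + 1), u ^ j * F j (EP k)) - u ^ 0 * F 0 (EP k)) := by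
        rw [Finset.sum_congr rfl hterm, ← Finset.mul_sum]
        congr 1
        rw [Finset.sum_range_succ' (fun j => u ^ j * F j (EP k)) m]
        ring
      have humFm : u ^ m * F m (EP k) ≤ u ^ 0 * F 0 (EP k) := by
        rw [pow_zero, one_mul, hF0]
        calc u ^ m * F m (EP k) ≤ u ^ m * (s ^ (2 * m) * (EP k).trace) :=
          mul_le_mul_of_nonneg_left (hFm (EP k) (hpsd k)) (by positivity)
        _ = (u * s ^ 2) ^ m * (EP k).trace := by rw [mul_pow, pow_mul]; ring
        _ = (EP k).trace := by rw [hus, one_pow, one_mul]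
      rw [hsum, Finset.sum_range_succ, ← hgk]
      exact mul_le_mul_of_nonneg_left (by linarith) (sq_nonneg s)
    have hgk0 : 0 ≤ g k := hVnn _ (hpsd k)
    have hS0 : 0 ≤ ∑ j ∈ Finset.range m, u ^ j * F (j + 1) (EP k) :=
      Finset.sum_nonneg fun j _ => mul_nonneg (by positivity) (hFnn (j + 1) _ (hpsd k))
    rw [hgsplit]
    have hmain : (1 - θ k) * ((∑ j ∈ Finset.range m, u ^ j * F (j + 1) (EP k)) + V Q)
        ≤ t * (s ^ 2 * g k + V Q) := by
      calc (1 - θ k) * ((∑ j ∈ Finset.range m, u ^ j * F (j + 1) (EP k)) + V Q)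
          ≤ t * ((∑ j ∈ Finset.range m, u ^ j * F (j + 1) (EP k)) + V Q) :=
        mul_le_mul_of_nonneg_right h1θ (by linarith)
      _ ≤ t * (s ^ 2 * g k + V Q) := mul_le_mul_of_nonneg_left (by linarith) ht.le
    have hθVP : θ k * V Pbar ≤ V Pbar := mul_le_of_le_one_left hVP hθk.2
    have hexpand : c0 + q * g k = V Pbar + t * V Q + t * (s ^ 2) * g k := by
      rw [hc0def, hqdef]
    rw [hexpand]
    linarith [hmain, hθVP]
  have hG := Stmt16Aux.geo_bound hq0 hq1 hstep
  have hG0 : 0 ≤ max (g K) (c0 / (1 - q)) := le_trans (hVnn _ (hpsd K)) (le_max_left _ _)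
  refine ⟨max (g K) (c0 / (1 - q)) + ∑ j ∈ Finset.range K, (EP j).trace, fun k => ?_⟩
  have hsum0 : 0 ≤ ∑ j ∈ Finset.range K, (EP j).trace := Finset.sum_nonneg fun j _ => htrnn j
  rcases lt_or_ge k K with hk | hk
  · have hle : (EP k).trace ≤ ∑ j ∈ Finset.range K, (EP j).trace :=
      Finset.single_le_sum (fun j _ => htrnn j) (Finset.mem_range.mpr hk)
    linarith
  · obtain ⟨i, rfl⟩ : ∃ i, k = K + i := ⟨k - K, by omega⟩
    have h1 := hG i
    have h2 := hVtr (EP (K + i)) (hpsd (K + i))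
    linarith
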